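/- Define real sequences (ℓ_j) and (u_j) by ℓ₀ = −1, u₀ = 1, and for each j ≥ 0: if j is odd then ℓ_{j+1} = (ℓ_j + u_j)/2 and u_{j+1} = u_j, while if j is even then ℓ_{j+1} = ℓ_j and u_{j+1} = (ℓ_j + u_j)/2; let I_j = [ℓ_j, u_j]. Let γ_a, γ_b, γ_c be real numbers with γ_a + γ_b + γ_c = −1. Then for every integer j ≥ 0, if γ_a, γ_b, γ_c ∈ I_j, then at most one of γ_a, γ_b, γ_c lies in I_j \ I_{j+1}. -/
import Mathlib


theorem bisection_difference_at_most_one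
    (l u : ℕ → ℝ) (hl0 : l 0 = -1) (hu0 : u 0 = 1)
    (hodd : ∀ j : ℕ, Odd j → l (j + 1) = (l j + u j) / 2 ∧ u (j + 1) = u j)
    (heven : ∀ j : ℕ, Even j → l (j + 1) = l j ∧ u (j + 1) = (l j + u j) / 2)
    (γa γb γc : ℝ) (hsum : γa + γb + γc = -1) :
    ∀ j : ℕ,
      γa ∈ Set.Icc (l j) (u j) → γb ∈ Set.Icc (l j) (u j) →
      γc ∈ Set.Icc (l j) (u j) →
      ¬(γa ∈ Set.Icc (l j) (u j) \ Set.Icc (l (j + 1)) (u (j + 1)) ∧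
        γb ∈ Set.Icc (l j) (u j) \ Set.Icc (l (j + 1)) (u (j + 1))) ∧
      ¬(γa ∈ Set.Icc (l j) (u j) \ Set.Icc (l (j + 1)) (u (j + 1)) ∧
        γc ∈ Set.Icc (l j) (u j) \ Set.Icc (l (j + 1)) (u (j + 1))) ∧
      ¬(γb ∈ Set.Icc (l j) (u j) \ Set.Icc (l (j + 1)) (u (j + 1)) ∧
        γc ∈ Set.Icc (l j) (u j) \ Set.Icc (l (j + 1)) (u (j + 1))) := by
  have inv : ∀ j : ℕ, (Even j → 2 * l j + u j = -1) ∧ (Odd j → l j + 2 * u j = -1) := by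
    intro j
    induction j with
    | zero =>
      constructor
      · intro _; rw [hl0, hu0]; ring
      · intro h; exact absurd h (by simp)
    | succ n ih =>
      rcases Nat.even_or_odd n with he | ho
      · obtain ⟨h1, h2⟩ := heven n he
        have := ih.1 he
        constructor
        · intro h; exact absurd h (by simpa using Nat.not_even_iff_odd.mpr (Even.add_one he))
        · intro _; rw [h1, h2]; linarith
      · obtain ⟨h1, h2⟩ := hodd n ho
        have := ih.2 ho
        constructor
        · intro _; rw [h1, h2]; linarith
        · intro h; exact absurd (Odd.add_one ho) (fun hev => (Nat.not_odd_iff_even.mpr hev) h)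
  intro j ha hb hc
  obtain ⟨ha1, ha2⟩ := ha
  obtain ⟨hb1, hb2⟩ := hb
  obtain ⟨hc1, hc2⟩ := hc
  rcases Nat.even_or_odd j with he | ho
  · obtain ⟨h1, h2⟩ := heven j he
    have hk := (inv j).1 he
    -- outside means x > (l j + u j)/2
    have key : ∀ x : ℝ, l j ≤ x → x ∉ Set.Icc (l (j+1)) (u (j+1)) → (l j + u j) / 2 < x := by
      intro x hx hnx
      rw [h1, h2] at hnx
      simp only [Set.mem_Icc, not_and, not_le] at hnx
      exact hnx hx
    refine ⟨?_, ?_, ?_⟩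
    · rintro ⟨⟨-, hna⟩, ⟨-, hnb⟩⟩
      have := key γa ha1 hna; have := key γb hb1 hnb; linarith
    · rintro ⟨⟨-, hna⟩, ⟨-, hnc⟩⟩
      have := key γa ha1 hna; have := key γc hc1 hnc; linarith
    · rintro ⟨⟨-, hnb⟩, ⟨-, hnc⟩⟩
      have := key γb hb1 hnb; have := key γc hc1 hnc; linarith
  · obtain ⟨h1, h2⟩ := hodd j ho
    have hk := (inv j).2 ho
    have key : ∀ x : ℝ, x ≤ u j → x ∉ Set.Icc (l (j+1)) (u (j+1)) → x < (l j + u j) / 2 := by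
      intro x hx hnx
      rw [h1, h2] at hnx
      simp only [Set.mem_Icc, not_and, not_le] at hnx
      by_contra hcon
      push_neg at hcon
      exact absurd hx (not_le.mpr (hnx hcon))
    refine ⟨?_, ?_, ?_⟩
    · rintro ⟨⟨-, hna⟩, ⟨-, hnb⟩⟩
      have := key γa ha2 hna; have := key γb hb2 hnb; linarith
    · rintro ⟨⟨-, hna⟩, ⟨-, hnc⟩⟩
      have := key γa ha2 hna; have := key γc hc2 hnc; linarith
    · rintro ⟨⟨-, hnb⟩, ⟨-, hnc⟩⟩
      have := key γb hb2 hnb; have := key γc hc2 hnc; linarith
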